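/- Let x be an adequate state (every crossing arc joins two distinct circles) and let X be an enhancement of x in which each A-zone contains at most one 0-labeled circle. Then over F₂ the A-trace tr(X) := ∑_{Y ∼_A X} Y is a cycle: d(tr(X)) = 0. -/

import Mathlib

attribute [local instance] Classical.propDecidable

/-- The local datum of the Khovanov differential at a crossing: changing an A-smoothing
to a B-smoothing either merges two circles `i ≠ j` of the source state (via the
relabeling `f`) or splits one circle into two circles `i ≠ j` of the target state
(via the relabeling `g`). -/
inductive KTrans (m n : ℕ) : Type
  | merge (f : Fin m → Fin n) (i j : Fin m) (hij : i ≠ j) (hf : f i = f j)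
  | split (g : Fin n → Fin m) (i j : Fin n) (hij : i ≠ j) (hg : g i = g j)

/-- The merge/split maps of the Frobenius algebra `R[q]/(q²)` acting on enhancements
(`true` = label 1 = `q`, `false` = label 0 = `1`):
merge: `q⊗q ↦ 0`, `1⊗q, q⊗1 ↦ q`, `1⊗1 ↦ 1`; split: `q ↦ q⊗q`, `1 ↦ q⊗1 + 1⊗q`. -/
noncomputable def ktransApply {R : Type*} [CommRing R] {m n : ℕ} :
    KTrans m n → (Fin m → Bool) → ((Fin n → Bool) →₀ R)
  | .merge f i j _ _, a =>
      if a i = true ∧ a j = true then 0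
      else Finsupp.single (fun l => decide (∃ k, f k = l ∧ a k = true)) 1
  | .split g i j _ _, a =>
      if a (g i) = true then Finsupp.single (a ∘ g) 1
      else Finsupp.single (Function.update (a ∘ g) i true) 1
        + Finsupp.single (Function.update (a ∘ g) j true) 1

/-- A combinatorial model of a link diagram for Viro-style Khovanov homology:
`c` crossings, states `s : Fin c → Bool` (`true` = A-smoothing), each state having
`circ s` circles, and for every A-smoothed crossing of every state the merge/split
transition datum to the state with that smoothing changed to B. -/
structure Diagram where
  c : ℕ
  circ : (Fin c → Bool) → ℕ
  trans : ∀ (s : Fin c → Bool) (t : Fin c), s t = true →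
    KTrans (circ s) (circ (Function.update s t false))

namespace Diagram

/-- Enhanced states: a state together with a `{0,1}`-labeling of its circles. -/
abbrev Enh (D : Diagram) : Type := Σ s : Fin D.c → Bool, Fin (D.circ s) → Bool

variable {R : Type*} [CommRing R]

/-- The Khovanov differential of an enhanced state:
`d X = ∑_t (-1)^{|A|_X^t} d_{c^t} X`, where `|A|_X^t` counts A-smoothings at crossings
of smaller index and `d_{c^t}` is the merge/split map (zero at B-smoothings). -/
noncomputable def dE (D : Diagram) (X : D.Enh) : D.Enh →₀ R :=
  ∑ t : Fin D.c,
    if h : X.1 t = true then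
      ((-1 : R) ^ (Finset.univ.filter fun r => r < t ∧ X.1 r = true).card) •
        Finsupp.mapDomain (fun b => (⟨Function.update X.1 t false, b⟩ : D.Enh))
          (ktransApply (D.trans X.1 t h) X.2)
    else 0

/-- The Khovanov differential on the chain module `C_R(D)`, the free `R`-module on
enhanced states. -/
noncomputable def d (D : Diagram) (Z : D.Enh →₀ R) : D.Enh →₀ R :=
  Z.sum fun e r => r • D.dE e

end Diagram

/-- Swap the labels on the two endpoint circles of a crossing arc. -/
def swapAt {n : ℕ} (e : Fin n × Fin n) (a : Fin n → Bool) : Fin n → Bool :=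
  Function.update (Function.update a e.1 (a e.2)) e.2 (a e.1)

/-- The equivalence relation `∼_A` (for `v = true`) resp. `∼_B` (for `v = false`) on
enhancements of a state, generated by swapping the labels on the two endpoint circles of
an arc of the corresponding type (`sm t = true` means an A-arc at crossing `t`, and
`ep t` gives the two circles the arc joins). -/
def RelLab {c n : ℕ} (sm : Fin c → Bool) (ep : Fin c → Fin n × Fin n) (v : Bool) :
    (Fin n → Bool) → (Fin n → Bool) → Prop :=
  Relation.ReflTransGen fun a b => ∃ t, sm t = v ∧ b = swapAt (ep t) a

/-- Connectivity of circles through arcs of a fixed type: `Conn sm ep true i j` says the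
circles `i`, `j` lie in the same A-zone (`v = false`: same B-zone). -/
def Conn {c n : ℕ} (sm : Fin c → Bool) (ep : Fin c → Fin n × Fin n) (v : Bool) :
    Fin n → Fin n → Prop :=
  Relation.ReflTransGen fun i j => ∃ t, sm t = v ∧ (ep t = (i, j) ∨ ep t = (j, i))

/-- Homogeneity of a state: no simple cycle of the state graph contains arcs of both
types (equivalently, every block of the state graph is all-A or all-B). -/
def Homog {c n : ℕ} (sm : Fin c → Bool) (ep : Fin c → Fin n × Fin n) : Prop :=
  ∀ (k : ℕ), 2 ≤ k → ∀ (te : ZMod k → Fin c) (ve : ZMod k → Fin n),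
    Function.Injective te → Function.Injective ve →
    (∀ i, ep (te i) = (ve i, ve (i + 1)) ∨ ep (te i) = (ve (i + 1), ve i)) →
    ∀ i j, sm (te i) = sm (te j)


section Aux

open Relation

lemma swapAt_eq_comp {n : ℕ} (e : Fin n × Fin n) (a : Fin n → Bool) :
    swapAt e a = a ∘ (Equiv.swap e.1 e.2) := by
  funext k
  simp only [swapAt, Function.comp]
  rcases eq_or_ne k e.2 with rfl | h2
  · rw [Function.update_self, Equiv.swap_apply_right]
  rcases eq_or_ne k e.1 with rfl | h1
  · rw [Function.update_of_ne h2, Function.update_self, Equiv.swap_apply_left]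
  · rw [Function.update_of_ne h2, Function.update_of_ne h1,
      Equiv.swap_apply_of_ne_of_ne h1 h2]

lemma swapAt_swapAt {n : ℕ} (e : Fin n × Fin n) (a : Fin n → Bool) :
    swapAt e (swapAt e a) = a := by
  rw [swapAt_eq_comp, swapAt_eq_comp]
  funext k
  simp [Function.comp, Equiv.swap_apply_self]

lemma conn_symm {c n : ℕ} {sm : Fin c → Bool} {ep : Fin c → Fin n × Fin n} :
    Symmetric (Conn sm ep true) :=
  fun _ _ hab => by
    induction hab with
    | refl => exact ReflTransGen.refl
    | tail _ hs ih =>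
      obtain ⟨t, ht, h⟩ := hs
      exact ReflTransGen.head ⟨t, ht, h.symm⟩ ih

lemma conn_swap {c n : ℕ} (sm : Fin c → Bool) (ep : Fin c → Fin n × Fin n) (t : Fin c)
    (ht : sm t = true) (i : Fin n) :
    Conn sm ep true (Equiv.swap (ep t).1 (ep t).2 i) i := by
  rcases eq_or_ne i (ep t).1 with rfl | h1
  · rw [Equiv.swap_apply_left]
    exact ReflTransGen.single ⟨t, ht, Or.inr rfl⟩
  rcases eq_or_ne i (ep t).2 with rfl | h2
  · rw [Equiv.swap_apply_right]
    exact ReflTransGen.single ⟨t, ht, Or.inl rfl⟩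
  · rw [Equiv.swap_apply_of_ne_of_ne h1 h2]
    exact ReflTransGen.refl

/-- "At most one 0-labeled circle per A-zone". -/
def ZoneOK {c n : ℕ} (sm : Fin c → Bool) (ep : Fin c → Fin n × Fin n)
    (a : Fin n → Bool) : Prop :=
  ∀ i j, Conn sm ep true i j → a i = false → a j = false → i = j

lemma zoneOK_of_relLab {c n : ℕ} {sm : Fin c → Bool} {ep : Fin c → Fin n × Fin n}
    {X b : Fin n → Bool} (h : RelLab sm ep true X b) (hX : ZoneOK sm ep X) :
    ZoneOK sm ep b := by
  induction h with
  | refl => exact hX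
  | tail _ hstep ih =>
    obtain ⟨t, ht, rfl⟩ := hstep
    intro i j hconn hi hj
    rw [swapAt_eq_comp] at hi hj
    have hc : Conn sm ep true (Equiv.swap (ep t).1 (ep t).2 i)
        (Equiv.swap (ep t).1 (ep t).2 j) :=
      ((conn_swap sm ep t ht i).trans hconn).trans (conn_symm (conn_swap sm ep t ht j))
    exact (Equiv.swap (ep t).1 (ep t).2).injective (ih _ _ hc hi hj)

lemma f_swap_apply {m n : ℕ} (f : Fin m → Fin n) (i j : Fin m) (hf : f i = f j)
    (k : Fin m) : f (Equiv.swap i j k) = f k := by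
  rcases eq_or_ne k i with rfl | h1
  · rw [Equiv.swap_apply_left, hf]
  rcases eq_or_ne k j with rfl | h2
  · rw [Equiv.swap_apply_right, hf]
  · rw [Equiv.swap_apply_of_ne_of_ne h1 h2]

lemma sum_ktrans_zero {m n : ℕ} (f : Fin m → Fin n) (i j : Fin m) (hne : i ≠ j)
    (hf : f i = f j) (S : Finset (Fin m → Bool))
    (hclosed : ∀ b ∈ S, swapAt (i, j) b ∈ S)
    (hzone : ∀ b ∈ S, ¬(b i = false ∧ b j = false)) :
    ∑ b ∈ S, ktransApply (R := ZMod 2) (KTrans.merge f i j hne hf) b = 0 := by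
  classical
  have hswap : ∀ (b : Fin m → Bool) (k : Fin m),
      swapAt (i, j) b k = b (Equiv.swap i j k) := fun b k => by
    rw [swapAt_eq_comp]; rfl
  refine Finset.sum_involution (fun b _ => swapAt (i, j) b) ?_ ?_
    (fun b hb => hclosed b hb) (fun b _ => swapAt_swapAt _ b)
  · intro b _
    simp only [ktransApply]
    by_cases hb : b i = true ∧ b j = true
    · rw [if_pos hb, if_pos ?_]
      · simp
      · refine ⟨?_, ?_⟩
        · rw [hswap, Equiv.swap_apply_left]; exact hb.2
        · rw [hswap, Equiv.swap_apply_right]; exact hb.1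
    · rw [if_neg hb, if_neg ?_]
      · have heq : (fun l => decide (∃ k, f k = l ∧ swapAt (i, j) b k = true))
            = (fun l => decide (∃ k, f k = l ∧ b k = true)) := by
          funext l
          rw [decide_eq_decide]
          constructor
          · rintro ⟨k, hk, hbk⟩
            rw [hswap] at hbk
            exact ⟨Equiv.swap i j k, by rw [f_swap_apply f i j hf]; exact hk, hbk⟩
          · rintro ⟨k, hk, hbk⟩
            refine ⟨Equiv.swap i j k, by rw [f_swap_apply f i j hf]; exact hk, ?_⟩
            rw [hswap, Equiv.swap_apply_self]; exact hbk
        rw [heq, ← Finsupp.single_add]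
        have h2 : (1 : ZMod 2) + 1 = 0 := by decide
        rw [h2, Finsupp.single_zero]
      · rw [hswap b i, Equiv.swap_apply_left, hswap b j, Equiv.swap_apply_right]
        exact fun h => hb ⟨h.2, h.1⟩
  · intro b hb hne0
    have hbS : ¬(b i = false ∧ b j = false) := hzone b hb
    have hb' : ¬(b i = true ∧ b j = true) := by
      intro h
      apply hne0
      simp only [ktransApply, if_pos h]
    have hij : b i ≠ b j := by
      cases hbi : b i <;> cases hbj : b j <;> simp_all
    intro heqq
    have h5 : swapAt (i, j) b i = b i := congrFun heqq i
    rw [hswap, Equiv.swap_apply_left] at h5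
    exact hij h5.symm

end Aux

/-- Over `F₂`, for an adequate state `x` (state `s0` of the diagram `D`, with each
A-arc `t` joining the two distinct circles `ep t`, matching the merge transition of the
differential) and an enhancement `X` with at most one 0-labeled circle in each A-zone,
the A-trace `tr(X) = ∑_{Y ∼_A X} Y` is a cycle: `d(tr X) = 0`. -/

theorem trace_is_cycle_F2 (D : Diagram) (s0 : Fin D.c → Bool)
    (ep : Fin D.c → Fin (D.circ s0) × Fin (D.circ s0))
    (hadq : ∀ t, (ep t).1 ≠ (ep t).2)
    (hcompatA : ∀ (t : Fin D.c) (h : s0 t = true),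
      ∃ f hne hf, D.trans s0 t h = KTrans.merge f (ep t).1 (ep t).2 hne hf)
    (X : Fin (D.circ s0) → Bool)
    (hzoneA : ∀ i j, Conn s0 ep true i j → X i = false → X j = false → i = j) :
    D.d (R := ZMod 2)
      (∑ b ∈ Finset.univ.filter (fun b => RelLab s0 ep true X b),
        Finsupp.single (⟨s0, b⟩ : D.Enh) 1) = 0 := by
  classical
  set S : Finset (Fin (D.circ s0) → Bool) :=
    Finset.univ.filter (fun b => RelLab s0 ep true X b) with hSdef
  have hmemS : ∀ b, b ∈ S ↔ RelLab s0 ep true X b := by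
    intro b; simp [hSdef]
  rw [Diagram.d, ← Finsupp.sum_finsetSum_index (fun e => by simp) (fun e x y => add_smul x y _)]
  have hsingle : ∀ b : Fin (D.circ s0) → Bool,
      (Finsupp.single (⟨s0, b⟩ : D.Enh) (1 : ZMod 2)).sum (fun e r => r • D.dE e)
        = D.dE (R := ZMod 2) ⟨s0, b⟩ := by
    intro b
    rw [Finsupp.sum_single_index (by simp)]
    exact one_smul _ _
  simp_rw [hsingle, Diagram.dE]
  rw [Finset.sum_comm]
  refine Finset.sum_eq_zero fun t _ => ?_
  by_cases h : s0 t = true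
  · obtain ⟨f, hne, hf, htr⟩ := hcompatA t h
    have step : ∀ b ∈ S,
        (if h' : (⟨s0, b⟩ : D.Enh).1 t = true then
          ((-1 : ZMod 2) ^ (Finset.univ.filter fun r =>
              r < t ∧ (⟨s0, b⟩ : D.Enh).1 r = true).card) •
            Finsupp.mapDomain
              (fun c => (⟨Function.update (⟨s0, b⟩ : D.Enh).1 t false, c⟩ : D.Enh))
              (ktransApply (D.trans (⟨s0, b⟩ : D.Enh).1 t h') (⟨s0, b⟩ : D.Enh).2)
         else 0)
        = Finsupp.mapDomain
            (fun c => (⟨Function.update s0 t false, c⟩ : D.Enh))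
            (ktransApply (R := ZMod 2) (KTrans.merge f (ep t).1 (ep t).2 hne hf) b) := by
      intro b _
      rw [dif_pos h]
      have hsign : (-1 : ZMod 2) = 1 := by decide
      rw [hsign, one_pow, one_smul, htr]
    rw [Finset.sum_congr rfl step, ← Finsupp.mapDomain_finset_sum,
      sum_ktrans_zero f (ep t).1 (ep t).2 hne hf S ?_ ?_, Finsupp.mapDomain_zero]
    · intro b hb
      rw [hmemS] at hb ⊢
      exact hb.tail ⟨t, h, rfl⟩
    · intro b hb hcontra
      rw [hmemS] at hb
      have hz : ZoneOK s0 ep b := zoneOK_of_relLab hb hzoneA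
      have hconn : Conn s0 ep true (ep t).1 (ep t).2 :=
        Relation.ReflTransGen.single ⟨t, h, Or.inl rfl⟩
      exact hadq t (hz _ _ hconn hcontra.1 hcontra.2)
  · exact Finset.sum_eq_zero fun b _ => dif_neg h
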